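/- Let M be a surface embedded in ℝ³ with inclusion map i_M, and v a vector field on ℝ³ tangent to M. If N is a unit normal to M defined in a neighborhood of M, then the pullback i_M^*(L_N v^♭) equals (curl v × N)^♭ restricted to M, where ♭ is the musical isomorphism. -/
import Mathlib


noncomputable section

abbrev R3 := Fin 3 → ℝ

/-- Euclidean dot product on ℝ³. -/
def dot3 (u v : R3) : ℝ := u 0 * v 0 + u 1 * v 1 + u 2 * v 2

/-- Cross product on ℝ³. -/
def cross3 (u v : R3) : R3 :=
  ![u 1 * v 2 - u 2 * v 1, u 2 * v 0 - u 0 * v 2, u 0 * v 1 - u 1 * v 0]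

/-- Standard basis vector of ℝ³. -/
def e3 (i : Fin 3) : R3 := Pi.single i 1

/-- The curl of a vector field on ℝ³. -/
def curl3 (v : R3 → R3) (p : R3) : R3 :=
  ![fderiv ℝ v p (e3 1) 2 - fderiv ℝ v p (e3 2) 1,
    fderiv ℝ v p (e3 2) 0 - fderiv ℝ v p (e3 0) 2,
    fderiv ℝ v p (e3 0) 1 - fderiv ℝ v p (e3 1) 0]

lemma expand3 (w : R3) : w = w 0 • e3 0 + w 1 • e3 1 + w 2 • e3 2 := by
  funext i
  fin_cases i <;> simp [e3, Pi.single_apply]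

lemma D_expand (D : R3 →L[ℝ] R3) (w : R3) :
    D w = w 0 • D (e3 0) + w 1 • D (e3 1) + w 2 • D (e3 2) := by
  conv_lhs => rw [expand3 w]
  simp

lemma curl_cross_alg (D : R3 →L[ℝ] R3) (w u : R3) :
    dot3 (cross3 ![D (e3 1) 2 - D (e3 2) 1, D (e3 2) 0 - D (e3 0) 2,
        D (e3 0) 1 - D (e3 1) 0] w) u
      = dot3 (D w) u - dot3 (D u) w := by
  rw [D_expand D w, D_expand D u]
  simp only [dot3, cross3, Pi.add_apply, Pi.smul_apply, smul_eq_mul,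
    Matrix.cons_val_zero, Matrix.cons_val_one, Matrix.head_cons,
    Matrix.cons_val_two, Matrix.tail_cons]
  ring

theorem pullback_lie_derivative_eq_curl_cross (M : Set R3) (v N : R3 → R3) (p : R3)
    (hp : p ∈ M)
    (hv : DifferentiableAt ℝ v p) (hN : DifferentiableAt ℝ N p)
    (hunit : ∀ᶠ x in nhds p, dot3 (N x) (N x) = 1)
    (htan : ∀ x ∈ M, dot3 (v x) (N x) = 0)
    (hcurve : ∀ u : R3, dot3 u (N p) = 0 →
      ∃ γ : ℝ → R3, γ 0 = p ∧ (∀ t, γ t ∈ M) ∧ HasDerivAt γ u 0) :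
    ∀ u : R3, dot3 u (N p) = 0 →
      dot3 (fderiv ℝ v p (N p)) u + dot3 (v p) (fderiv ℝ N p u) =
        dot3 (cross3 (curl3 v p) (N p)) u := by
  intro u hu
  set Dv := fderiv ℝ v p with hDv
  set DN := fderiv ℝ N p with hDN
  have hkey : dot3 (Dv u) (N p) + dot3 (v p) (DN u) = 0 := by
    have hvi : ∀ i : Fin 3, HasFDerivAt (fun x => v x i)
        ((ContinuousLinearMap.proj i : R3 →L[ℝ] ℝ).comp Dv) p := fun i =>
      (ContinuousLinearMap.proj i : R3 →L[ℝ] ℝ).hasFDerivAt.comp p hv.hasFDerivAt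
    have hNi : ∀ i : Fin 3, HasFDerivAt (fun x => N x i)
        ((ContinuousLinearMap.proj i : R3 →L[ℝ] ℝ).comp DN) p := fun i =>
      (ContinuousLinearMap.proj i : R3 →L[ℝ] ℝ).hasFDerivAt.comp p hN.hasFDerivAt
    obtain ⟨F, hf, hFu⟩ : ∃ F : R3 →L[ℝ] ℝ, HasFDerivAt (fun x => dot3 (v x) (N x)) F p ∧
        F u = dot3 (Dv u) (N p) + dot3 (v p) (DN u) := by
      refine ⟨_, (((hvi 0).mul (hNi 0)).add ((hvi 1).mul (hNi 1))).add
        ((hvi 2).mul (hNi 2)), ?_⟩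
      · simp only [dot3, ContinuousLinearMap.add_apply, ContinuousLinearMap.smul_apply,
          ContinuousLinearMap.comp_apply, ContinuousLinearMap.proj_apply, smul_eq_mul]
        ring
    obtain ⟨γ, hγ0, hγM, hγd⟩ := hcurve u hu
    rw [← hγ0] at hf
    have hcomp : HasDerivAt (fun t => dot3 (v (γ t)) (N (γ t))) (F u) 0 :=
      hf.comp_hasDerivAt 0 hγd
    have hconst : HasDerivAt (fun t : ℝ => dot3 (v (γ t)) (N (γ t))) 0 0 := by
      have hzero : (fun t => dot3 (v (γ t)) (N (γ t))) = fun _ => (0 : ℝ) := by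
        funext t; exact htan _ (hγM t)
      rw [hzero]; exact hasDerivAt_const 0 0
    have := hcomp.unique hconst
    rw [hFu] at this
    linarith
  have halg := curl_cross_alg Dv (N p) u
  have hthis : dot3 (cross3 (curl3 v p) (N p)) u = dot3 (Dv (N p)) u - dot3 (Dv u) (N p) := by
    simpa [curl3, hDv] using halg
  rw [hthis]
  linarith
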